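/- Energy distance via characteristic functions in one dimension: for probability distributions P₀', P₁' on ℝ with finite first moments and characteristic functions f̂₀, f̂₁, the energy distance with α = 1 satisfies ε₁(P₀',P₁') = (1/π) ∫_{−∞}^{∞} |f̂₀(t) − f̂₁(t)|² / t² dt. -/

import Mathlib

open MeasureTheory Real Set Filter Topology

/-- The characteristic function of a measure on ℝ. -/
noncomputable def charFunction (P : Measure ℝ) (t : ℝ) : ℂ :=
  ∫ x, Complex.exp (t * x * Complex.I) ∂P


lemma one_sub_cos_nonneg (s : ℝ) : 0 ≤ 1 - Real.cos s := by
  have := Real.cos_le_one s; linarith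

lemma key_nonneg (s : ℝ) : 0 ≤ (1 - Real.cos s) / s ^ 2 :=
  div_nonneg (one_sub_cos_nonneg s) (sq_nonneg s)

lemma key_bound (s : ℝ) : (1 - Real.cos s) / s ^ 2 ≤ 4 * (1 + s ^ 2)⁻¹ := by
  rcases eq_or_ne s 0 with rfl | hs
  · norm_num
  · have hs2 : (0:ℝ) < s ^ 2 := by positivity
    have hpos : (0:ℝ) < 1 + s ^ 2 := by positivity
    rw [div_le_iff₀ hs2]
    have h1 : 1 - Real.cos s ≤ s ^ 2 / 2 := by
      have := Real.one_sub_sq_div_two_le_cos (x := s); linarith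
    have h2 : 1 - Real.cos s ≤ 2 := by have := Real.neg_one_le_cos s; linarith
    have key : 4 * (1 + s^2)⁻¹ * s^2 = 4 * s^2 / (1 + s^2) := by
      field_simp
    rw [key, le_div_iff₀ hpos]
    nlinarith [sq_nonneg s, mul_le_mul_of_nonneg_left h2 hs2.le]

lemma key_integrable : Integrable (fun s : ℝ => (1 - Real.cos s) / s ^ 2) := by
  have hm : AEStronglyMeasurable (fun s : ℝ => (1 - Real.cos s) / s ^ 2) volume := by
    apply Measurable.aestronglyMeasurable; measurability
  refine (integrable_inv_one_add_sq.const_mul 4).mono' hm ?_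
  filter_upwards with s
  rw [Real.norm_eq_abs, abs_of_nonneg (key_nonneg s)]
  exact key_bound s

lemma inner_t_integral {s : ℝ} (hs : 0 < s) :
    ∫ t in Ioi (0:ℝ), t * Real.exp (-(s * t)) = 1 / s ^ 2 := by
  have h := integral_Ioi_of_hasDerivAt_of_nonneg' (a := 0)
    (g := fun t : ℝ => -(Real.exp (-(s * t)) * (t / s + 1 / s ^ 2)))
    (g' := fun t : ℝ => t * Real.exp (-(s * t))) (l := 0)
    ?_ ?_ ?_
  · rw [h]; simp [hs.ne']
  · intro t _
    have he : HasDerivAt (fun t : ℝ => Real.exp (-(s * t)))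
        (Real.exp (-(s * t)) * (-s)) t := by
      simpa using (((hasDerivAt_id t).const_mul s).neg).exp
    have hl : HasDerivAt (fun t : ℝ => t / s + 1 / s ^ 2) (1 / s) t :=
      ((hasDerivAt_id t).div_const s).add_const _
    have := (he.mul hl).neg
    refine this.congr_deriv ?_
    field_simp
    ring
  · intro t ht
    exact mul_nonneg (le_of_lt ht) (Real.exp_nonneg _)
  · have h1 : Tendsto (fun t : ℝ => s * t) atTop atTop :=
      (tendsto_id.const_mul_atTop hs)
    have h2 : Tendsto (fun u : ℝ => u * Real.exp (-u)) atTop (𝓝 0) := by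
      simpa using Real.tendsto_pow_mul_exp_neg_atTop_nhds_zero 1
    have h3 : Tendsto (fun u : ℝ => Real.exp (-u)) atTop (𝓝 0) :=
      Real.tendsto_exp_neg_atTop_nhds_zero
    have key : Tendsto (fun t : ℝ => -(Real.exp (-(s*t)) * (t / s + 1 / s ^ 2)))
        atTop (𝓝 (-(1/s^2 * 0 + 1/s^2 * 0))) := by
      have : ∀ t : ℝ, -(Real.exp (-(s*t)) * (t / s + 1 / s ^ 2))
          = -((1/s^2) * ((s*t) * Real.exp (-(s*t))) + (1/s^2) * Real.exp (-(s*t))) := by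
        intro t; field_simp
      simp_rw [this]
      exact (((h2.comp h1).const_mul _).add ((h3.comp h1).const_mul _)).neg
    simpa using key

lemma inner_s_integral {t : ℝ} (ht : 0 < t) :
    ∫ s in Ioi (0:ℝ), (1 - Real.cos s) * Real.exp (-(s * t)) = 1 / (t * (1 + t ^ 2)) := by
  have h := integral_Ioi_of_hasDerivAt_of_nonneg' (a := 0)
    (g := fun s : ℝ => -(Real.exp (-(s * t)) / t)
        + Real.exp (-(s * t)) * (t * Real.cos s - Real.sin s) / (1 + t ^ 2))
    (g' := fun s : ℝ => (1 - Real.cos s) * Real.exp (-(s * t))) (l := 0)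
    ?_ ?_ ?_
  · rw [h]
    have h1 : (0:ℝ) < 1 + t ^ 2 := by positivity
    field_simp
    simp only [Real.exp_zero, Real.sin_zero, Real.cos_zero]; ring_nf; simp
  · intro s _
    have he : HasDerivAt (fun s : ℝ => Real.exp (-(s * t)))
        (Real.exp (-(s * t)) * (-t)) s := by
      simpa using (((hasDerivAt_id s).mul_const t).neg).exp
    have hcs : HasDerivAt (fun s : ℝ => t * Real.cos s - Real.sin s)
        (t * (-Real.sin s) - Real.cos s) s :=
      ((Real.hasDerivAt_cos s).const_mul t).sub (Real.hasDerivAt_sin s)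
    have h2 := ((he.mul hcs).div_const (1 + t ^ 2))
    have h1 := (he.div_const t).neg
    have := h1.add h2
    refine this.congr_deriv ?_
    have hpos : (0:ℝ) < 1 + t ^ 2 := by positivity
    have ht' : t ≠ 0 := ht.ne'
    have hpos' : (1:ℝ) + t ^ 2 ≠ 0 := hpos.ne'
    have h4 : Real.exp (-(s*t)) * -t / t = -Real.exp (-(s*t)) := by
      field_simp
    have h5 : (Real.exp (-(s*t)) * -t * (t * Real.cos s - Real.sin s)
        + Real.exp (-(s*t)) * (t * -Real.sin s - Real.cos s)) / (1 + t ^ 2)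
        = -(Real.exp (-(s*t)) * Real.cos s) := by
      rw [div_eq_iff hpos']; ring
    rw [h4, h5]; ring
  · intro s _
    show 0 ≤ (1 - Real.cos s) * Real.exp (-(s*t))
    have := Real.cos_le_one s
    have := Real.exp_nonneg (-(s*t))
    nlinarith
  · have h1 : Tendsto (fun s : ℝ => s * t) atTop atTop :=
      (tendsto_id.atTop_mul_const ht)
    have h3 : Tendsto (fun s : ℝ => Real.exp (-(s * t))) atTop (𝓝 0) :=
      Real.tendsto_exp_neg_atTop_nhds_zero.comp h1
    have hb : ∀ s : ℝ, |t * Real.cos s - Real.sin s| ≤ |t| + 1 := by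
      intro s
      calc |t * Real.cos s - Real.sin s| ≤ |t * Real.cos s| + |Real.sin s| := abs_sub _ _
        _ ≤ |t| * 1 + 1 := by
            gcongr
            · rw [abs_mul]; gcongr; exact Real.abs_cos_le_one s
            · exact Real.abs_sin_le_one s
        _ = |t| + 1 := by ring
    have hsq : Tendsto (fun s : ℝ => Real.exp (-(s * t)) * (t * Real.cos s - Real.sin s))
        atTop (𝓝 0) := by
      have hlim : Tendsto (fun s : ℝ => Real.exp (-(s * t)) * (|t|+1)) atTop (𝓝 0) := by
        simpa using h3.mul_const (|t|+1)
      apply squeeze_zero_norm _ hlim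
      intro s
      rw [norm_mul, Real.norm_eq_abs, Real.norm_eq_abs, Real.abs_exp]
      exact mul_le_mul_of_nonneg_left (hb s) (Real.exp_nonneg _)
    have := ((h3.div_const t).neg).add (hsq.div_const (1 + t ^ 2))
    simpa using this

lemma inner_t_integrable {s : ℝ} (hs : 0 < s) :
    IntegrableOn (fun t : ℝ => t * Real.exp (-(s * t))) (Set.Ioi (0:ℝ)) := by
  apply integrableOn_Ioi_deriv_of_nonneg' (a := 0)
    (g := fun t : ℝ => -(Real.exp (-(s * t)) * (t / s + 1 / s ^ 2)))
    (l := 0)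
  · intro t _
    have he : HasDerivAt (fun t : ℝ => Real.exp (-(s * t)))
        (Real.exp (-(s * t)) * (-s)) t := by
      simpa using (((hasDerivAt_id t).const_mul s).neg).exp
    have hl : HasDerivAt (fun t : ℝ => t / s + 1 / s ^ 2) (1 / s) t :=
      ((hasDerivAt_id t).div_const s).add_const _
    have := (he.mul hl).neg
    refine this.congr_deriv ?_
    field_simp
    ring
  · intro t ht
    exact mul_nonneg (le_of_lt ht) (Real.exp_nonneg _)
  · have h1 : Filter.Tendsto (fun t : ℝ => s * t) Filter.atTop Filter.atTop :=
      (Filter.tendsto_id.const_mul_atTop hs)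
    have h2 : Filter.Tendsto (fun u : ℝ => u * Real.exp (-u)) Filter.atTop (nhds 0) := by
      simpa using Real.tendsto_pow_mul_exp_neg_atTop_nhds_zero 1
    have h3 : Filter.Tendsto (fun u : ℝ => Real.exp (-u)) Filter.atTop (nhds 0) :=
      Real.tendsto_exp_neg_atTop_nhds_zero
    have key : Filter.Tendsto (fun t : ℝ => -(Real.exp (-(s*t)) * (t / s + 1 / s ^ 2)))
        Filter.atTop (nhds (-(1/s^2 * 0 + 1/s^2 * 0))) := by
      have : ∀ t : ℝ, -(Real.exp (-(s*t)) * (t / s + 1 / s ^ 2))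
          = -((1/s^2) * ((s*t) * Real.exp (-(s*t))) + (1/s^2) * Real.exp (-(s*t))) := by
        intro t; field_simp
      simp_rw [this]
      exact (((h2.comp h1).const_mul _).add ((h3.comp h1).const_mul _)).neg
    simpa using key

lemma integral_Ioi_key : ∫ s in Ioi (0:ℝ), (1 - Real.cos s) / s ^ 2 = π / 2 := by
  set μ := volume.restrict (Ioi (0:ℝ))
  set F : ℝ → ℝ → ℝ := fun s t => (1 - Real.cos s) * (t * Real.exp (-(s * t))) with hF
  have hFnn : ∀ s t : ℝ, 0 ≤ s → 0 ≤ t → 0 ≤ F s t := by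
    intro s t _ ht
    have := Real.cos_le_one s
    have := Real.exp_nonneg (-(s*t))
    apply mul_nonneg (by linarith) (mul_nonneg ht (by assumption))
  have hmeas : AEStronglyMeasurable (Function.uncurry F) (μ.prod μ) := by
    apply Measurable.aestronglyMeasurable
    apply Measurable.mul
    · exact (measurable_const.sub (Real.measurable_cos.comp measurable_fst))
    · exact measurable_snd.mul
        ((Real.measurable_exp.comp ((measurable_fst.mul measurable_snd).neg)))
  have hslice : ∀ s ∈ Ioi (0:ℝ), Integrable (fun t => F s t) μ := by
    intro s hs
    exact ((inner_t_integrable hs).const_mul _)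
  have hslice_int : ∀ s ∈ Ioi (0:ℝ), ∫ t, F s t ∂μ = (1 - Real.cos s) / s ^ 2 := by
    intro s hs
    rw [hF]
    simp only
    rw [integral_const_mul, inner_t_integral hs]
    rw [mul_one_div]
  have hnorm_int : ∀ s ∈ Ioi (0:ℝ), ∫ t, ‖F s t‖ ∂μ = (1 - Real.cos s) / s ^ 2 := by
    intro s hs
    rw [← hslice_int s hs]
    apply setIntegral_congr_fun measurableSet_Ioi
    intro t ht
    exact norm_of_nonneg (hFnn s t (le_of_lt hs) (le_of_lt ht))
  have hint : Integrable (Function.uncurry F) (μ.prod μ) := by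
    rw [integrable_prod_iff hmeas]
    constructor
    · filter_upwards [ae_restrict_mem measurableSet_Ioi] with s hs
      exact hslice s hs
    · apply (key_integrable.integrableOn.congr_fun _ measurableSet_Ioi).congr
      · exact (ae_restrict_mem measurableSet_Ioi).mono fun s hs => (hnorm_int s hs).symm
      · intro s hs; rfl
  calc ∫ s in Ioi (0:ℝ), (1 - Real.cos s) / s ^ 2
      = ∫ s, ∫ t, F s t ∂μ ∂μ := by
        apply setIntegral_congr_fun measurableSet_Ioi
        intro s hs
        exact (hslice_int s hs).symm
    _ = ∫ t, ∫ s, F s t ∂μ ∂μ := integral_integral_swap hint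
    _ = ∫ t in Ioi (0:ℝ), (1 + t ^ 2)⁻¹ := by
        apply setIntegral_congr_fun measurableSet_Ioi
        intro t ht
        have : ∀ s : ℝ, F s t = t * ((1 - Real.cos s) * Real.exp (-(s * t))) := by
          intro s; rw [hF]; ring
        simp_rw [this]
        rw [integral_const_mul, inner_s_integral ht]
        have h1 : (0:ℝ) < 1 + t ^ 2 := by positivity
        have ht' : (0:ℝ) < t := ht
        field_simp
    _ = π / 2 := by
        rw [integral_Ioi_inv_one_add_sq]
        simp [Real.arctan_zero]

lemma key_even (s : ℝ) : (1 - Real.cos (-s)) / (-s) ^ 2 = (1 - Real.cos s) / s ^ 2 := by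
  rw [Real.cos_neg, neg_pow]
  norm_num

lemma integral_real_key : ∫ s : ℝ, (1 - Real.cos s) / s ^ 2 = π := by
  have h1 : ∫ s in Iic (0:ℝ), (1 - Real.cos s) / s ^ 2
      = ∫ s in Ioi (0:ℝ), (1 - Real.cos s) / s ^ 2 := by
    have h := integral_comp_neg_Iic (c := (0:ℝ)) (fun s => (1 - Real.cos s) / s ^ 2)
    simp_rw [key_even, neg_zero] at h
    rw [h]
  rw [← intervalIntegral.integral_Iic_add_Ioi (b := (0:ℝ)) key_integrable.integrableOn
    key_integrable.integrableOn, h1, integral_Ioi_key]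
  ring

lemma scaled_integrable (u : ℝ) :
    Integrable (fun t : ℝ => (1 - Real.cos (t * u)) / t ^ 2) := by
  rcases eq_or_ne u 0 with rfl | hu
  · simpa using integrable_zero ℝ ℝ (volume : Measure ℝ)
  · have h := (key_integrable.const_mul (u ^ 2)).comp_mul_left' hu
    apply h.congr
    filter_upwards with t
    show u ^ 2 * ((1 - Real.cos (u * t)) / (u * t) ^ 2) = (1 - Real.cos (t * u)) / t ^ 2
    rcases eq_or_ne t 0 with rfl | ht
    · simp
    · rw [mul_comm u t]
      field_simp

lemma scaled_integral (u : ℝ) :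
    ∫ t : ℝ, (1 - Real.cos (t * u)) / t ^ 2 = π * |u| := by
  rcases eq_or_ne u 0 with rfl | hu
  · simp
  · have key : ∀ t : ℝ, (1 - Real.cos (t * u)) / t ^ 2
        = u ^ 2 * ((1 - Real.cos (u * t)) / (u * t) ^ 2) := by
      intro t
      rcases eq_or_ne t 0 with rfl | ht
      · simp
      · rw [mul_comm u t]; field_simp
    simp_rw [key]
    rw [show (fun t : ℝ => u ^ 2 * ((1 - Real.cos (u * t)) / (u * t) ^ 2))
        = fun t : ℝ => (fun s => u ^ 2 * ((1 - Real.cos s) / s ^ 2)) (u * t) from rfl]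
    rw [Measure.integral_comp_mul_left
      (fun s => u ^ 2 * ((1 - Real.cos s) / s ^ 2)) u]
    rw [integral_const_mul, integral_real_key]
    rw [smul_eq_mul, abs_inv]
    have h3 : |u| ≠ 0 := by simpa using hu
    have h4 : u ^ 2 = |u| ^ 2 := (sq_abs u).symm
    rw [h4]
    field_simp


variable {P Q : Measure ℝ} [IsProbabilityMeasure P] [IsProbabilityMeasure Q]

lemma integrable_cos_mul (t : ℝ) : Integrable (fun x : ℝ => Real.cos (t * x)) P := by
  refine (integrable_const (1:ℝ)).mono' ?_ ?_
  · exact (Real.continuous_cos.comp (continuous_const.mul continuous_id)).aestronglyMeasurable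
  · filter_upwards with x
    rw [Real.norm_eq_abs]
    exact Real.abs_cos_le_one _

lemma integrable_sin_mul (t : ℝ) : Integrable (fun x : ℝ => Real.sin (t * x)) P := by
  refine (integrable_const (1:ℝ)).mono' ?_ ?_
  · exact (Real.continuous_sin.comp (continuous_const.mul continuous_id)).aestronglyMeasurable
  · filter_upwards with x
    rw [Real.norm_eq_abs]
    exact Real.abs_sin_le_one _

lemma charFunction_eq (P : Measure ℝ) [IsProbabilityMeasure P] (t : ℝ) :
    charFunction P t = ((∫ x, Real.cos (t * x) ∂P : ℝ) : ℂ)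
      + ((∫ x, Real.sin (t * x) ∂P : ℝ) : ℂ) * Complex.I := by
  have hrw : ∀ x : ℝ, Complex.exp (t * x * Complex.I)
      = ((Real.cos (t * x) : ℝ) : ℂ) + ((Real.sin (t * x) : ℝ) : ℂ) * Complex.I := by
    intro x
    rw [show ((t : ℂ) * x) = ((t * x : ℝ) : ℂ) by push_cast; ring]
    rw [Complex.exp_mul_I, Complex.ofReal_cos, Complex.ofReal_sin]
  unfold charFunction
  simp_rw [hrw]
  have h1 : Integrable (fun x : ℝ => ((Real.cos (t * x) : ℝ) : ℂ)) P :=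
    (integrable_cos_mul t).ofReal
  have h2 : Integrable (fun x : ℝ => ((Real.sin (t * x) : ℝ) : ℂ) * Complex.I) P :=
    ((integrable_sin_mul t).ofReal).mul_const Complex.I
  have h3 : ∫ x, ((Real.cos (t * x) : ℝ) : ℂ) ∂P = ((∫ x, Real.cos (t * x) ∂P : ℝ) : ℂ) :=
    integral_ofReal
  have h4 : ∫ x, ((Real.sin (t * x) : ℝ) : ℂ) ∂P = ((∫ x, Real.sin (t * x) ∂P : ℝ) : ℂ) :=
    integral_ofReal
  rw [integral_add h1 h2, integral_mul_const, h3, h4]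

lemma double_integral_one_sub_cos (P Q : Measure ℝ) [IsProbabilityMeasure P]
    [IsProbabilityMeasure Q] (t : ℝ) :
    ∫ x, ∫ y, (1 - Real.cos (t * (x - y))) ∂Q ∂P
      = 1 - ((∫ x, Real.cos (t * x) ∂P) * (∫ y, Real.cos (t * y) ∂Q)
          + (∫ x, Real.sin (t * x) ∂P) * (∫ y, Real.sin (t * y) ∂Q)) := by
  have hinner : ∀ x : ℝ, ∫ y, (1 - Real.cos (t * (x - y))) ∂Q
      = 1 - (Real.cos (t * x) * (∫ y, Real.cos (t * y) ∂Q)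
          + Real.sin (t * x) * (∫ y, Real.sin (t * y) ∂Q)) := by
    intro x
    have hrw : ∀ y : ℝ, (1 : ℝ) - Real.cos (t * (x - y))
        = 1 - (Real.cos (t * x) * Real.cos (t * y) + Real.sin (t * x) * Real.sin (t * y)) := by
      intro y
      rw [show t * (x - y) = t * x - t * y by ring, Real.cos_sub]
    simp_rw [hrw]
    have ha : Integrable (fun y : ℝ => Real.cos (t * x) * Real.cos (t * y)) Q :=
      (integrable_cos_mul t).const_mul _
    have hb : Integrable (fun y : ℝ => Real.sin (t * x) * Real.sin (t * y)) Q :=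
      (integrable_sin_mul t).const_mul _
    have hab : Integrable (fun y : ℝ => Real.cos (t * x) * Real.cos (t * y)
        + Real.sin (t * x) * Real.sin (t * y)) Q := ha.add hb
    rw [integral_sub (integrable_const 1) hab, integral_add ha hb,
      integral_const_mul, integral_const_mul]
    simp [measure_univ]
  simp_rw [hinner]
  have ha : Integrable (fun x : ℝ => Real.cos (t * x) * ∫ y, Real.cos (t * y) ∂Q) P :=
    (integrable_cos_mul t).mul_const _
  have hb : Integrable (fun x : ℝ => Real.sin (t * x) * ∫ y, Real.sin (t * y) ∂Q) P :=
    (integrable_sin_mul t).mul_const _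
  have hab : Integrable (fun x : ℝ => Real.cos (t * x) * (∫ y, Real.cos (t * y) ∂Q)
      + Real.sin (t * x) * ∫ y, Real.sin (t * y) ∂Q) P := ha.add hb
  rw [integral_sub (integrable_const 1) hab, integral_add ha hb,
    integral_mul_const, integral_mul_const]
  simp [measure_univ]

lemma abs_sq_char_sub (P Q : Measure ℝ) [IsProbabilityMeasure P] [IsProbabilityMeasure Q]
    (t : ℝ) :
    ‖charFunction P t - charFunction Q t‖ ^ 2
      = ((∫ x, Real.cos (t * x) ∂P) - (∫ x, Real.cos (t * x) ∂Q)) ^ 2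
        + ((∫ x, Real.sin (t * x) ∂P) - (∫ x, Real.sin (t * x) ∂Q)) ^ 2 := by
  rw [charFunction_eq P t, charFunction_eq Q t, ← Complex.normSq_eq_norm_sq,
    Complex.normSq_apply]
  simp [Complex.add_re, Complex.add_im, Complex.mul_re, Complex.mul_im]
  ring

variable {P Q : Measure ℝ} [IsProbabilityMeasure P] [IsProbabilityMeasure Q]

lemma pair_integrable (hP : Integrable (fun x : ℝ => |x|) P)
    (hQ : Integrable (fun x : ℝ => |x|) Q) :
    Integrable (fun p : ℝ × ℝ => |p.1 - p.2|) (P.prod Q) := by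
  have hmap1 : Measure.map Prod.fst (P.prod Q) = P := by
    simp [Measure.map_fst_prod, measure_univ]
  have hmap2 : Measure.map Prod.snd (P.prod Q) = Q := by
    simp [Measure.map_snd_prod, measure_univ]
  have h1 : Integrable (fun p : ℝ × ℝ => |p.1|) (P.prod Q) := by
    rw [← hmap1] at hP
    exact (integrable_map_measure hP.aestronglyMeasurable
      measurable_fst.aemeasurable).mp hP
  have h2 : Integrable (fun p : ℝ × ℝ => |p.2|) (P.prod Q) := by
    rw [← hmap2] at hQ
    exact (integrable_map_measure hQ.aestronglyMeasurable
      measurable_snd.aemeasurable).mp hQ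
  have hsum : Integrable (fun p : ℝ × ℝ => |p.1| + |p.2|) (P.prod Q) := h1.add h2
  refine hsum.mono' ?_ ?_
  · exact ((continuous_fst.sub continuous_snd).abs).aestronglyMeasurable
  · filter_upwards with p
    rw [Real.norm_eq_abs, abs_abs]
    exact abs_sub _ _

noncomputable def gfun (P Q : Measure ℝ) (t : ℝ) : ℝ :=
  ∫ p : ℝ × ℝ, (1 - Real.cos (t * (p.1 - p.2))) / t ^ 2 ∂(P.prod Q)

lemma F_uncurry_integrable (hP : Integrable (fun x : ℝ => |x|) P)
    (hQ : Integrable (fun x : ℝ => |x|) Q) :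
    Integrable (fun q : ℝ × (ℝ × ℝ) => (1 - Real.cos (q.1 * (q.2.1 - q.2.2))) / q.1 ^ 2)
      (volume.prod (P.prod Q)) := by
  have hmeas : AEStronglyMeasurable
      (fun q : ℝ × (ℝ × ℝ) => (1 - Real.cos (q.1 * (q.2.1 - q.2.2))) / q.1 ^ 2)
      (volume.prod (P.prod Q)) := by
    apply Measurable.aestronglyMeasurable
    apply Measurable.div
    · exact measurable_const.sub (Real.measurable_cos.comp
        (measurable_fst.mul (measurable_snd.fst.sub measurable_snd.snd)))
    · exact (measurable_fst.pow measurable_const)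
  rw [integrable_prod_iff' hmeas]
  constructor
  · filter_upwards with p
    exact scaled_integrable (p.1 - p.2)
  · have hval : ∀ p : ℝ × ℝ,
        (∫ t : ℝ, ‖(1 - Real.cos (t * (p.1 - p.2))) / t ^ 2‖) = π * |p.1 - p.2| := by
      intro p
      rw [← scaled_integral (p.1 - p.2)]
      congr 1
      funext t
      rw [Real.norm_eq_abs, abs_of_nonneg]
      apply div_nonneg _ (sq_nonneg t)
      have := Real.cos_le_one (t * (p.1 - p.2)); linarith
    apply ((pair_integrable hP hQ).const_mul π).congr
    filter_upwards with p
    exact (hval p).symm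

lemma gfun_integrable (hP : Integrable (fun x : ℝ => |x|) P)
    (hQ : Integrable (fun x : ℝ => |x|) Q) : Integrable (gfun P Q) volume := by
  have := (F_uncurry_integrable hP hQ).integral_prod_left
  exact this

lemma gfun_integral (hP : Integrable (fun x : ℝ => |x|) P)
    (hQ : Integrable (fun x : ℝ => |x|) Q) :
    ∫ t : ℝ, gfun P Q t = π * ∫ p : ℝ × ℝ, |p.1 - p.2| ∂(P.prod Q) := by
  have hint : Integrable (Function.uncurry
      (fun (t : ℝ) (p : ℝ × ℝ) => (1 - Real.cos (t * (p.1 - p.2))) / t ^ 2))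
      (volume.prod (P.prod Q)) := F_uncurry_integrable hP hQ
  have hswap := integral_integral_swap hint
  unfold gfun
  rw [hswap]
  simp_rw [scaled_integral]
  rw [integral_const_mul]

lemma gfun_eq (t : ℝ) :
    gfun P Q t = (∫ x, ∫ y, (1 - Real.cos (t * (x - y))) ∂Q ∂P) / t ^ 2 := by
  unfold gfun
  have hint : Integrable (fun p : ℝ × ℝ => 1 - Real.cos (t * (p.1 - p.2))) (P.prod Q) := by
    refine (integrable_const (2:ℝ)).mono' ?_ ?_
    · exact (continuous_const.sub (Real.continuous_cos.comp
        (continuous_const.mul (continuous_fst.sub continuous_snd)))).aestronglyMeasurable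
    · filter_upwards with p
      rw [Real.norm_eq_abs, abs_le]
      have h1 := Real.cos_le_one (t * (p.1 - p.2))
      have h2 := Real.neg_one_le_cos (t * (p.1 - p.2))
      constructor <;> linarith
  simp_rw [div_eq_mul_inv]
  rw [integral_mul_const, integral_prod _ hint]

lemma energy_prod_eq (hP : Integrable (fun x : ℝ => |x|) P)
    (hQ : Integrable (fun x : ℝ => |x|) Q) :
    ∫ x, ∫ y, |x - y| ∂Q ∂P = ∫ p : ℝ × ℝ, |p.1 - p.2| ∂(P.prod Q) :=
  (integral_prod _ (pair_integrable hP hQ)).symm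

/-- Energy distance via characteristic functions (Székely–Rizzo): for probability distributions
P₀', P₁' on ℝ with finite first moments,
ε₁(P₀',P₁') = 2E|X−Y| − E|X−X'| − E|Y−Y'| = (1/π) ∫ |f̂₀(t) − f̂₁(t)|²/t² dt. -/
theorem energy_distance_eq_charFunction_integral
    (P₀ P₁ : Measure ℝ) [IsProbabilityMeasure P₀] [IsProbabilityMeasure P₁]
    (h₀ : Integrable (fun x : ℝ => |x|) P₀) (h₁ : Integrable (fun x : ℝ => |x|) P₁) :
    2 * (∫ x, ∫ y, |x - y| ∂P₁ ∂P₀)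
      - (∫ x, ∫ x', |x - x'| ∂P₀ ∂P₀)
      - (∫ y, ∫ y', |y - y'| ∂P₁ ∂P₁)
      = (1 / Real.pi) * ∫ t : ℝ, ‖charFunction P₀ t - charFunction P₁ t‖ ^ 2 / t ^ 2 := by
  have hpt : ∀ t : ℝ, ‖charFunction P₀ t - charFunction P₁ t‖ ^ 2 / t ^ 2
      = 2 * gfun P₀ P₁ t - gfun P₀ P₀ t - gfun P₁ P₁ t := by
    intro t
    rw [abs_sq_char_sub P₀ P₁ t, gfun_eq, gfun_eq, gfun_eq,
      double_integral_one_sub_cos P₀ P₁ t, double_integral_one_sub_cos P₀ P₀ t,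
      double_integral_one_sub_cos P₁ P₁ t]
    ring
  have i01 := gfun_integrable h₀ h₁
  have i00 := gfun_integrable h₀ h₀
  have i11 := gfun_integrable h₁ h₁
  have ha : Integrable (fun t : ℝ => 2 * gfun P₀ P₁ t) volume := i01.const_mul 2
  have hb : Integrable (fun t : ℝ => 2 * gfun P₀ P₁ t - gfun P₀ P₀ t) volume := ha.sub i00
  have hrhs : ∫ t : ℝ, ‖charFunction P₀ t - charFunction P₁ t‖ ^ 2 / t ^ 2
      = 2 * (∫ t : ℝ, gfun P₀ P₁ t) - (∫ t : ℝ, gfun P₀ P₀ t) - (∫ t : ℝ, gfun P₁ P₁ t) := by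
    simp_rw [hpt]
    rw [integral_sub hb i11, integral_sub ha i00, integral_const_mul]
  rw [hrhs, gfun_integral h₀ h₁, gfun_integral h₀ h₀, gfun_integral h₁ h₁,
    energy_prod_eq h₀ h₁, energy_prod_eq h₀ h₀, energy_prod_eq h₁ h₁]
  have hpi : (Real.pi : ℝ) ≠ 0 := Real.pi_ne_zero
  field_simp
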